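/- Let (S, →) be a finitely branching transition system with computable successor function, equipped with a decidable well-quasi-order ≤ that is strongly compatible with →. Then the set of states from which an infinite computation exists is decidable. -/

import Mathlib

namespace WSTS

open Computable

/-! ### Computable list map -/

theorem clist_map {α β σ : Type} [Primcodable α] [Primcodable β] [Primcodable σ]
    {g : α → List β} {f : α → β → σ} (hg : Computable g) (hf : Computable₂ f) :
    Computable fun a => (g a).map (f a) := by
  have hstep : Computable₂ fun (p : α × ℕ) (q : ℕ × List σ) =>
      Option.casesOn (motive := fun _ => List σ) ((g p.1)[q.1]?) q.2
        (fun b => q.2 ++ [f p.1 b]) := by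
    apply Computable.option_casesOn
      (list_getElem?.comp (hg.comp (fst.comp fst)) (fst.comp snd)) (snd.comp snd)
    exact (list_concat.comp (snd.comp (snd.comp fst)) (hf.comp (fst.comp (fst.comp fst)) snd)).to₂
  have hF : Computable fun p : α × ℕ =>
      Nat.rec (motive := fun _ => List σ) []
        (fun y IH => Option.casesOn (motive := fun _ => List σ) ((g p.1)[y]?) IH
          (fun b => IH ++ [f p.1 b])) p.2 :=
    Computable.nat_rec snd (const []) hstep
  have key : ∀ (a : α) (n : ℕ),
      Nat.rec (motive := fun _ => List σ) []
        (fun y IH => Option.casesOn (motive := fun _ => List σ) ((g a)[y]?) IH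
          (fun b => IH ++ [f a b])) n
      = ((g a).take n).map (f a) := by
    intro a n
    induction n with
    | zero => simp
    | succ n ih =>
      simp only [List.take_succ, List.map_append, ← ih]
      cases h : (g a)[n]? <;> simp [h]
  have := hF.comp (Computable.id.pair (list_length.comp hg))
  refine this.of_eq fun a => ?_
  simp only [key, id, List.take_length]

/-! ### The algorithm -/

def anyTrue (l : List Bool) : Bool := decide (List.idxOf true l < l.length)

theorem anyTrue_primrec : Primrec anyTrue :=
  PrimrecPred.decide (Primrec.nat_lt.comp (Primrec.list_idxOf.comp (Primrec.const true) Primrec.id)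
    Primrec.list_length)

theorem anyTrue_iff {l : List Bool} : anyTrue l = true ↔ true ∈ l := by
  simp [anyTrue, List.idxOf_lt_length_iff]

variable {S : Type}

def exts (succ : S → List S) (p : S × List S) : List (S × List S) :=
  (succ p.1).map fun t => (t, p.1 :: p.2)

def extsAll (succ : S → List S) (F : List (S × List S)) : List (S × List S) :=
  (F.map (exts succ)).flatten

def goodExt (leb : S → S → Bool) (p : S × List S) : Bool :=
  anyTrue (p.2.map fun x => leb x p.1)

def Gstep (succ : S → List S) (leb : S → S → Bool) (c : Bool ⊕ List (S × List S)) :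
    Bool ⊕ List (S × List S) :=
  Sum.casesOn c Sum.inl fun F =>
    Nat.casesOn (motive := fun _ => Bool ⊕ List (S × List S)) F.length (Sum.inl false) fun _ =>
      cond (anyTrue ((extsAll succ F).map (goodExt leb)))
        (Sum.inl true) (Sum.inr (extsAll succ F))

def runF (succ : S → List S) (leb : S → S → Bool) (s : S) (n : ℕ) : Bool ⊕ List (S × List S) :=
  Nat.rec (Sum.inr [(s, [])]) (fun _ IH => Gstep succ leb IH) n

theorem mem_extsAll {succ : S → List S} {F : List (S × List S)} {q : S × List S} :
    q ∈ extsAll succ F ↔ ∃ p ∈ F, ∃ t ∈ succ p.1, q = (t, p.1 :: p.2) := by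
  constructor
  · intro hq
    obtain ⟨l, hl, hql⟩ := List.mem_flatten.mp hq
    obtain ⟨p, hp, rfl⟩ := List.mem_map.mp hl
    obtain ⟨t, ht, rfl⟩ := List.mem_map.mp hql
    exact ⟨p, hp, t, ht, rfl⟩
  · rintro ⟨p, hp, t, ht, rfl⟩
    exact List.mem_flatten.mpr ⟨exts succ p, List.mem_map.mpr ⟨p, hp, rfl⟩,
      List.mem_map.mpr ⟨t, ht, rfl⟩⟩

section Comp
variable [Primcodable S] {succ : S → List S} {leb : S → S → Bool}

theorem exts_comp (hsucc : Computable succ) : Computable (exts succ) :=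
  clist_map (hsucc.comp fst)
    ((snd.pair (list_cons.comp (fst.comp fst) (snd.comp fst))).to₂)

theorem extsAll_comp (hsucc : Computable succ) : Computable (extsAll succ) :=
  Primrec.list_flatten.to_comp.comp
    (clist_map Computable.id ((exts_comp hsucc).comp snd).to₂)

theorem goodExt_comp (hleb : Computable₂ leb) : Computable (goodExt leb) :=
  anyTrue_primrec.to_comp.comp
    (clist_map snd ((hleb.comp snd (fst.comp fst)).to₂))

theorem Gstep_comp (hsucc : Computable succ) (hleb : Computable₂ leb) :
    Computable (Gstep succ leb) := by
  have hbody : Computable fun F : List (S × List S) =>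
      cond (anyTrue ((extsAll succ F).map (goodExt leb)))
        (Sum.inl true : Bool ⊕ List (S × List S)) (Sum.inr (extsAll succ F)) :=
    Computable.cond
      (anyTrue_primrec.to_comp.comp
        (clist_map (extsAll_comp hsucc) ((goodExt_comp hleb).comp snd).to₂))
      (const (Sum.inl true)) (sumInr.comp (extsAll_comp hsucc))
  exact Computable.sumCasesOn Computable.id (sumInl.comp snd).to₂
    (Computable.nat_casesOn (list_length.comp snd) (const (Sum.inl false))
      ((hbody.comp (snd.comp fst)).to₂)).to₂

theorem runF_comp (hsucc : Computable succ) (hleb : Computable₂ leb) :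
    Computable₂ (runF succ leb) := by
  have : Computable fun p : S × ℕ =>
      Nat.rec (motive := fun _ => Bool ⊕ List (S × List S)) (Sum.inr [(p.1, [])])
        (fun y IH => Gstep succ leb (y, IH).2) p.2 :=
    Computable.nat_rec snd
      (sumInr.comp (list_cons.comp (fst.pair (const ([] : List S))) (const [])))
      (((Gstep_comp hsucc hleb).comp (snd.comp snd)).to₂)
  exact this.of_eq fun p => rfl

end Comp

/-! ### Semantics -/

inductive Path (step : S → S → Prop) (s : S) : S → List S → Prop
  | nil : Path step s s []
  | cons {h r t} : Path step s h r → step h t → Path step s t (h :: r)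

def Bad (le : S → S → Prop) (l : List S) : Prop := l.Pairwise fun a x => ¬le x a

variable {step le : S → S → Prop} {succ : S → List S} {leb : S → S → Bool} {s : S}

theorem path_suffix {h' : S} {r' : List S} (hp : Path step s h' r') :
    ∀ {h : S} {r : List S}, (h :: r) <:+ (h' :: r') → Path step s h r := by
  induction hp with
  | nil =>
    intro h r hs
    obtain ⟨u, hu⟩ := hs
    cases u with
    | nil => simp at hu; obtain ⟨rfl, rfl⟩ := hu; exact Path.nil
    | cons a u' => simp [List.cons_eq_cons] at hu
  | cons hp hst ih =>
    intro h r hs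
    rcases List.suffix_cons_iff.mp hs with heq | hs'
    · obtain ⟨rfl, rfl⟩ := List.cons_eq_cons.mp heq
      exact Path.cons hp hst
    · exact ih hs'

theorem path_last {h : S} {r : List S} (hp : Path step s h r) : [s] <:+ (h :: r) := by
  induction hp with
  | nil => exact List.suffix_refl _
  | cons hp hst ih => exact ih.trans (List.suffix_cons _ _)

theorem suffix_extend {l m : List S} (hs : l <:+ m) (hl : l.length < m.length) :
    ∃ t, (t :: l) <:+ m := by
  obtain ⟨u, rfl⟩ := hs
  rcases List.eq_nil_or_concat u with rfl | ⟨u', t, rfl⟩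
  · simp at hl
  · exact ⟨t, u', by simp⟩

theorem path_fun {h : S} {r : List S} (hp : Path step s h r) :
    ∃ u : ℕ → S, u 0 = s ∧ u r.length = h ∧ (∀ k, k < r.length → step (u k) (u (k + 1))) ∧
      ∀ x ∈ h :: r, ∃ i ≤ r.length, x = u i := by
  induction hp with
  | nil =>
    refine ⟨fun _ => s, rfl, rfl, by simp, ?_⟩
    intro x hx; simp at hx; exact ⟨0, le_refl _, hx⟩
  | @cons h' r' t hp hst ih =>
    obtain ⟨u, hu0, huh, hustep, humem⟩ := ih
    refine ⟨fun k => if k ≤ r'.length then u k else t, by simp [hu0], by simp, ?_, ?_⟩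
    · intro k hk
      simp only [List.length_cons] at hk
      show step (if k ≤ r'.length then u k else t) (if k + 1 ≤ r'.length then u (k + 1) else t)
      by_cases hke : k = r'.length
      · subst hke
        rw [if_pos (le_refl _), if_neg (by omega), huh]
        exact hst
      · have hklt : k < r'.length := by omega
        rw [if_pos (by omega), if_pos (by omega)]
        exact hustep k hklt
    · intro x hx
      rcases List.mem_cons.mp hx with rfl | hx'
      · refine ⟨r'.length + 1, by simp, ?_⟩
        show x = if r'.length + 1 ≤ r'.length then u (r'.length + 1) else x
        rw [if_neg (by omega)]
      · obtain ⟨i, hi, rfl⟩ := humem x hx'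
        refine ⟨i, by simp; omega, ?_⟩
        show u i = if i ≤ r'.length then u i else t
        rw [if_pos hi]

theorem pump (htrans : Transitive le)
    (hcompat : ∀ s₁ t₁ s₂ : S, le s₁ t₁ → step s₁ s₂ → ∃ t₂ : S, step t₁ t₂ ∧ le s₂ t₂)
    (u : ℕ → S) (n i : ℕ) (hi : i < n)
    (hstep : ∀ k, k < n → step (u k) (u (k + 1))) (hle : le (u i) (u n)) :
    ∃ f : ℕ → S, f 0 = u 0 ∧ ∀ m, step (f m) (f (m + 1)) := by
  classical
  have hnext : ∀ q : {x : S × ℕ // x.2 < n ∧ le (u x.2) x.1},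
      ∃ q' : {x : S × ℕ // x.2 < n ∧ le (u x.2) x.1}, step q.1.1 q'.1.1 := by
    rintro ⟨⟨x, k⟩, hk, hxle⟩
    obtain ⟨y, hy, hley⟩ := hcompat (u k) x (u (k + 1)) hxle (hstep k hk)
    by_cases hkn : k + 1 = n
    · exact ⟨⟨⟨y, i⟩, hi, htrans hle (hkn ▸ hley)⟩, hy⟩
    · exact ⟨⟨⟨y, k + 1⟩, by omega, hley⟩, hy⟩
  choose nxt hnxt using hnext
  have hn0 : 0 < n := by omega
  refine ⟨fun m => if m < n then u m else
    (nxt^[m - n] ⟨(u n, i), hi, hle⟩).1.1, by simp [hn0], ?_⟩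
  intro m
  by_cases h1 : m + 1 < n
  · have h0 : m < n := by omega
    simp only [if_pos h0, if_pos h1]
    exact hstep m h0
  · by_cases h0 : m < n
    · have hmn : m + 1 = n := by omega
      simp only [if_pos h0, if_neg h1]
      have : m + 1 - n = 0 := by omega
      rw [this]
      simp only [Function.iterate_zero, id]
      exact hmn ▸ hstep m h0
    · simp only [if_neg h0, if_neg h1]
      have : m + 1 - n = (m - n) + 1 := by omega
      rw [this, Function.iterate_succ_apply']
      exact hnxt _

theorem runF_inv (hsucc : ∀ a t : S, step a t ↔ t ∈ succ a)
    (hleb : ∀ a t : S, leb a t = true ↔ le a t) :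
    ∀ n (F : List (S × List S)), runF succ leb s n = Sum.inr F →
      ∀ p : S × List S, p ∈ F ↔ Path step s p.1 p.2 ∧ p.2.length = n ∧ Bad le (p.1 :: p.2) := by
  intro n
  induction n with
  | zero =>
    intro F hF p
    have hF' : (Sum.inr [(s, [])] : Bool ⊕ List (S × List S)) = Sum.inr F := hF
    obtain rfl : ([(s, [])] : List (S × List S)) = F := by injection hF'
    constructor
    · intro hp
      simp only [List.mem_singleton] at hp
      subst hp
      exact ⟨Path.nil, rfl, List.pairwise_singleton _ _⟩
    · rintro ⟨hp, hlen, _⟩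
      obtain ⟨p1, p2⟩ := p
      simp only at hlen
      obtain rfl : p2 = [] := List.length_eq_zero_iff.mp hlen
      cases hp
      simp
  | succ n ih =>
    intro F hF p
    have hF' : Gstep succ leb (runF succ leb s n) = Sum.inr F := hF
    cases hrn : runF succ leb s n with
    | inl b => rw [hrn] at hF'; simp [Gstep] at hF'
    | inr F0 =>
      rw [hrn] at hF'
      cases hF0 : F0 with
      | nil => rw [hF0] at hF'; simp [Gstep] at hF'
      | cons a F0' =>
        subst hF0
        cases hAny : anyTrue ((extsAll succ (a :: F0')).map (goodExt leb)) with
        | true => simp [Gstep, hAny] at hF'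
        | false =>
          have hFE : extsAll succ (a :: F0') = F := by
            simpa [Gstep, hAny] using hF'
          subst hFE
          have hno : ∀ q ∈ extsAll succ (a :: F0'), goodExt leb q = false := by
            intro q hq
            by_contra hc
            have hq' : goodExt leb q = true := by
              cases hgq : goodExt leb q
              · exact absurd hgq hc
              · rfl
            have : true ∈ (extsAll succ (a :: F0')).map (goodExt leb) :=
              List.mem_map.mpr ⟨q, hq, hq'⟩
            rw [← anyTrue_iff, hAny] at this
            simp at this
          constructor
          · intro hpF
            obtain ⟨q0, hq0, t, ht, rfl⟩ := mem_extsAll.mp hpF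
            obtain ⟨hPath, hlen, hBad⟩ := (ih _ hrn q0).mp hq0
            refine ⟨Path.cons hPath ((hsucc q0.1 t).mpr ht), by simp [hlen], ?_⟩
            rw [Bad, List.pairwise_cons]
            refine ⟨?_, hBad⟩
            intro x hx hlex
            have hgf : goodExt leb (t, q0.1 :: q0.2) = false := hno _ hpF
            have : true ∈ ((q0.1 :: q0.2).map fun x => leb x t) :=
              List.mem_map.mpr ⟨x, hx, (hleb x t).mpr hlex⟩
            rw [← anyTrue_iff] at this
            rw [goodExt] at hgf
            simp only at hgf
            rw [hgf] at this
            simp at this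
          · rintro ⟨hPath, hlen, hBad⟩
            obtain ⟨p1, p2⟩ := p
            cases hPath with
            | nil => simp at hlen
            | @cons h' r' _ hp0 hst =>
              apply mem_extsAll.mpr
              refine ⟨(h', r'), ?_, p1, (hsucc _ _).mp hst, rfl⟩
              apply (ih _ hrn (h', r')).mpr
              refine ⟨hp0, ?_, (List.pairwise_cons.mp hBad).2⟩
              simpa using hlen

theorem runF_inl {n : ℕ} {b : Bool} (h : runF succ leb s n = Sum.inl b) :
    ∀ m, n ≤ m → runF succ leb s m = Sum.inl b := by
  intro m hm
  obtain ⟨k, rfl⟩ := Nat.exists_eq_add_of_le hm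
  induction k with
  | zero => exact h
  | succ k ihk =>
    have hG : runF succ leb s (n + k + 1) = Gstep succ leb (runF succ leb s (n + k)) := rfl
    rw [show n + (k + 1) = (n + k) + 1 from rfl, hG, ihk (Nat.le_add_right _ _)]
    rfl

theorem runF_true (hsucc : ∀ a t : S, step a t ↔ t ∈ succ a)
    (hleb : ∀ a t : S, leb a t = true ↔ le a t) :
    ∀ n, runF succ leb s n = Sum.inl true →
      ∃ (h : S) (r : List S) (t : S), Path step s h r ∧ step h t ∧ ∃ x ∈ h :: r, le x t := by
  intro n
  induction n with
  | zero =>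
    intro h
    exact absurd (h : (Sum.inr [(s, [])] : Bool ⊕ List (S × List S)) = Sum.inl true) Sum.inr_ne_inl
  | succ n ihn =>
    intro hT
    have hT' : Gstep succ leb (runF succ leb s n) = Sum.inl true := hT
    cases hrn : runF succ leb s n with
    | inl b =>
      rw [hrn] at hT'
      have hb : b = true := by simpa [Gstep] using hT'
      exact ihn (by rw [hrn, hb])
    | inr F0 =>
      rw [hrn] at hT'
      cases hF0 : F0 with
      | nil => rw [hF0] at hT'; simp [Gstep] at hT'
      | cons a F0' =>
        subst hF0
        cases hAny : anyTrue ((extsAll succ (a :: F0')).map (goodExt leb)) with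
        | false => simp [Gstep, hAny] at hT'
        | true =>
          have hmem : true ∈ (extsAll succ (a :: F0')).map (goodExt leb) :=
            anyTrue_iff.mp hAny
          obtain ⟨q, hq, hgq⟩ := List.mem_map.mp hmem
          obtain ⟨q0, hq0, t, ht, rfl⟩ := mem_extsAll.mp hq
          have hprops := (runF_inv hsucc hleb n _ hrn q0).mp hq0
          rw [goodExt] at hgq
          simp only at hgq
          have : true ∈ ((q0.1 :: q0.2).map fun x => leb x t) := anyTrue_iff.mp hgq
          obtain ⟨x, hx, hlebx⟩ := List.mem_map.mp this
          exact ⟨q0.1, q0.2, t, hprops.1, (hsucc _ _).mpr ht, x, hx, (hleb _ _).mp hlebx⟩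

theorem runF_total (hsucc : ∀ a t : S, step a t ↔ t ∈ succ a)
    (hleb : ∀ a t : S, leb a t = true ↔ le a t)
    (hwqo : ∀ f : ℕ → S, ∃ i j : ℕ, i < j ∧ le (f i) (f j)) :
    ∃ n b, runF succ leb s n = Sum.inl b := by
  by_contra hc
  push_neg at hc
  have hInr : ∀ n, ∃ F, runF succ leb s n = Sum.inr F := by
    intro n
    cases h : runF succ leb s n with
    | inl b => exact absurd h (hc n b)
    | inr F => exact ⟨F, rfl⟩
  have hBadPaths : ∀ n, ∃ (h : S) (r : List S),
      Path step s h r ∧ Bad le (h :: r) ∧ r.length = n := by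
    intro n
    obtain ⟨F, hF⟩ := hInr n
    cases hF0 : F with
    | nil =>
      exfalso
      obtain ⟨F', hF'⟩ := hInr (n + 1)
      have hG : Gstep succ leb (runF succ leb s n) = Sum.inr F' := hF'
      rw [hF, hF0] at hG
      simp [Gstep] at hG
    | cons a F0' =>
      have := (runF_inv hsucc hleb n F hF a).mp (by rw [hF0]; exact List.mem_cons_self)
      exact ⟨a.1, a.2, this.1, this.2.2, this.2.1⟩
  have extStep : ∀ (h : S) (r : List S),
      (∀ n, ∃ (h' : S) (r' : List S), Path step s h' r' ∧ Bad le (h' :: r') ∧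
        n ≤ r'.length ∧ (h :: r) <:+ (h' :: r')) →
      ∃ t, step h t ∧ ∀ n, ∃ (h' : S) (r' : List S), Path step s h' r' ∧ Bad le (h' :: r') ∧
        n ≤ r'.length ∧ (t :: h :: r) <:+ (h' :: r') := by
    intro h r hE
    choose ph pr hPath hBad hLen hSuf using hE
    have hlift : ∀ n : ℕ, ∃ t, step h t ∧
        (t :: h :: r) <:+ (ph (r.length + n + 1) :: pr (r.length + n + 1)) := by
      intro n
      have hlen : (h :: r).length < (ph (r.length + n + 1) :: pr (r.length + n + 1)).length := by
        have := hLen (r.length + n + 1)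
        simp only [List.length_cons]
        omega
      obtain ⟨t, hts⟩ := suffix_extend (hSuf (r.length + n + 1)) hlen
      have hpt : Path step s t (h :: r) := path_suffix (hPath _) hts
      have hst : step h t := by cases hpt; assumption
      exact ⟨t, hst, hts⟩
    choose tf htstep htsuf using hlift
    haveI : Finite {x | x ∈ succ h} := (List.finite_toSet (succ h)).to_subtype
    let fsub : ℕ → {x | x ∈ succ h} := fun n => ⟨tf n, (hsucc h (tf n)).mp (htstep n)⟩
    obtain ⟨t, htinf⟩ := Finite.exists_infinite_fiber fsub
    have hsetinf : Set.Infinite (fsub ⁻¹' {t}) := Set.infinite_coe_iff.mp htinf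
    refine ⟨t.1, (hsucc h t.1).mpr t.2, ?_⟩
    intro n
    obtain ⟨m, hmmem, hmn⟩ := hsetinf.exists_gt n
    have hfm : tf m = t.1 := congrArg Subtype.val hmmem
    refine ⟨ph (r.length + m + 1), pr (r.length + m + 1), hPath _, hBad _, ?_, hfm ▸ htsuf m⟩
    have := hLen (r.length + m + 1)
    omega
  have ext0 : ∀ n, ∃ (h' : S) (r' : List S), Path step s h' r' ∧ Bad le (h' :: r') ∧
      n ≤ r'.length ∧ (s :: ([] : List S)) <:+ (h' :: r') := by
    intro n
    obtain ⟨h', r', hp, hb, hlen⟩ := hBadPaths n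
    exact ⟨h', r', hp, hb, hlen ▸ le_refl _, path_last hp⟩
  have hnext : ∀ q : {p : S × List S // ∀ n, ∃ (h' : S) (r' : List S),
      Path step s h' r' ∧ Bad le (h' :: r') ∧ n ≤ r'.length ∧ (p.1 :: p.2) <:+ (h' :: r')},
      ∃ q' : {p : S × List S // ∀ n, ∃ (h' : S) (r' : List S),
        Path step s h' r' ∧ Bad le (h' :: r') ∧ n ≤ r'.length ∧ (p.1 :: p.2) <:+ (h' :: r')},
      step q.1.1 q'.1.1 ∧ q'.1.2 = q.1.1 :: q.1.2 := by
    rintro ⟨⟨h, r⟩, hE⟩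
    obtain ⟨t, hst, hE'⟩ := extStep h r hE
    exact ⟨⟨(t, h :: r), hE'⟩, hst, rfl⟩
  choose nxt hnstep hncons using hnext
  let P := fun k => nxt^[k] ⟨(s, []), ext0⟩
  have hPsucc : ∀ k, P (k + 1) = nxt (P k) := fun k => Function.iterate_succ_apply' _ _ _
  have hmemP : ∀ i j, i < j → (P i).1.1 ∈ (P j).1.2 := by
    intro i j hij
    induction j with
    | zero => omega
    | succ j ihj =>
      rw [hPsucc, hncons]
      rcases Nat.lt_succ_iff_lt_or_eq.mp hij with h | h
      · exact List.mem_cons_of_mem _ (ihj h)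
      · subst h; exact List.mem_cons_self
  obtain ⟨i, j, hij, hle⟩ := hwqo fun k => (P k).1.1
  have hbadj : Bad le ((P j).1.1 :: (P j).1.2) := by
    obtain ⟨h', r', _, hb, _, hsuf⟩ := (P j).2 0
    exact hb.sublist hsuf.sublist
  exact (List.rel_of_pairwise_cons hbadj (hmemP i j hij)) hle

end WSTS

/-- In a finitely branching well-structured transition system with computable successor
function and decidable (computable) well-quasi-order strongly compatible with the
transition relation, the set of states admitting an infinite computation is decidable. -/
theorem stmt_10 {S : Type} [Primcodable S]
    (step : S → S → Prop) (le : S → S → Prop)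
    (succ : S → List S) (hsucc : ∀ s t : S, step s t ↔ t ∈ succ s)
    (hsucc_comp : Computable succ)
    (leb : S → S → Bool) (hleb : ∀ s t : S, leb s t = true ↔ le s t)
    (hleb_comp : Computable₂ leb)
    (hrefl : Reflexive le) (htrans : Transitive le)
    (hwqo : ∀ f : ℕ → S, ∃ i j : ℕ, i < j ∧ le (f i) (f j))
    (hcompat : ∀ s₁ t₁ s₂ : S, le s₁ t₁ → step s₁ s₂ → ∃ t₂ : S, step t₁ t₂ ∧ le s₂ t₂) :
    ∃ d : S → Bool, Computable d ∧
      ∀ s : S, d s = true ↔ ∃ f : ℕ → S, f 0 = s ∧ ∀ n : ℕ, step (f n) (f (n + 1)) := by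
  classical
  open WSTS in
  set g : S → ℕ → Option Bool := fun s n =>
    Sum.casesOn (motive := fun _ => Option Bool) (WSTS.runF succ leb s n) Option.some
      (fun _ => Option.none) with hgdef
  have hgcomp : Computable₂ g := by
    have hrun : Computable (fun p : S × ℕ => WSTS.runF succ leb p.1 p.2) :=
      WSTS.runF_comp hsucc_comp hleb_comp
    exact Computable.sumCasesOn hrun (Computable.option_some.comp Computable.snd).to₂
      ((Computable.const Option.none).comp Computable.fst).to₂
  have hdom : ∀ s, (Nat.rfindOpt (g s)).Dom := by
    intro s
    obtain ⟨n, b, hb⟩ := WSTS.runF_total (step := step) (le := le) (s := s) hsucc hleb hwqo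
    exact Nat.rfindOpt_dom.2 ⟨n, b, by simp [hgdef, hb]⟩
  refine ⟨fun s => (Nat.rfindOpt (g s)).get (hdom s), ?_, fun s => ?_⟩
  · exact (Partrec.rfindOpt hgcomp).of_eq_tot fun s => Part.get_mem (hdom s)
  · set d : S → Bool := fun s => (Nat.rfindOpt (g s)).get (hdom s) with hddef
    have hds : ∃ n, WSTS.runF succ leb s n = Sum.inl (d s) := by
      have hmem : d s ∈ Nat.rfindOpt (g s) := Part.get_mem (hdom s)
      obtain ⟨n, hn⟩ := Nat.rfindOpt_spec hmem
      refine ⟨n, ?_⟩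
      rw [Option.mem_def] at hn
      cases hrn : WSTS.runF succ leb s n with
      | inl b =>
        have : g s n = some b := by simp [hgdef, hrn]
        rw [this] at hn
        obtain rfl : b = d s := by injection hn
        rfl
      | inr F =>
        have : g s n = none := by simp [hgdef, hrn]
        rw [this] at hn
        cases hn
    constructor
    · intro hdt
      obtain ⟨n, hn⟩ := hds
      rw [hdt] at hn
      obtain ⟨h, r, t, hPath, hst, x, hx, hlex⟩ :=
        WSTS.runF_true (step := step) (le := le) hsucc hleb n hn
      obtain ⟨u, hu0, huh, hustep, humem⟩ := WSTS.path_fun hPath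
      obtain ⟨i, hi, rfl⟩ := humem x hx
      set u' : ℕ → S := fun k => if k ≤ r.length then u k else t with hu'def
      have hstep' : ∀ k, k < r.length + 1 → step (u' k) (u' (k + 1)) := by
        intro k hk
        by_cases hke : k = r.length
        · subst hke
          simp only [hu'def, le_refl, if_pos]
          rw [if_neg (by omega), huh]
          exact hst
        · have hklt : k < r.length := by omega
          simp only [hu'def]
          rw [if_pos (by omega), if_pos (by omega)]
          exact hustep k hklt
      have hle' : le (u' i) (u' (r.length + 1)) := by
        simp only [hu'def]
        rw [if_pos hi, if_neg (by omega)]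
        exact hlex
      obtain ⟨f, hf0, hfstep⟩ := WSTS.pump htrans hcompat u' (r.length + 1) i
        (Nat.lt_succ_of_le hi) hstep' hle'
      refine ⟨f, ?_, hfstep⟩
      rw [hf0]
      simp only [hu'def]
      rw [if_pos (Nat.zero_le _)]
      exact hu0
    · rintro ⟨f, hf0, hfstep⟩
      by_contra hdt
      have hdf : d s = false := by
        cases hdsb : d s
        · rfl
        · exact absurd hdsb hdt
      obtain ⟨n0, hn0⟩ := hds
      rw [hdf] at hn0
      have hnotrue : ∀ k, WSTS.runF succ leb s k ≠ Sum.inl true := by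
        intro k hk
        rcases le_total k n0 with hle' | hle'
        · have := WSTS.runF_inl hk n0 hle'
          rw [hn0] at this
          simp at this
        · have := WSTS.runF_inl hn0 k hle'
          rw [hk] at this
          simp at this
      set pl : ℕ → List S := fun j =>
        Nat.rec (motive := fun _ => List S) [] (fun j IH => f j :: IH) j with hpl
      have hplsucc : ∀ j, pl (j + 1) = f j :: pl j := fun j => rfl
      have hplPath : ∀ j, WSTS.Path step s (f j) (pl j) := by
        intro j
        induction j with
        | zero =>
          show WSTS.Path step s (f 0) (pl 0)
          have h0 : pl 0 = [] := rfl
          rw [h0, hf0]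
          exact WSTS.Path.nil
        | succ j ihj =>
          rw [hplsucc]
          exact WSTS.Path.cons ihj (hfstep j)
      have hplMem : ∀ i j, i < j → f i ∈ pl j := by
        intro i j hij
        induction j with
        | zero => omega
        | succ j ihj =>
          rw [hplsucc]
          rcases Nat.lt_succ_iff_lt_or_eq.mp hij with h | h
          · exact List.mem_cons_of_mem _ (ihj h)
          · subst h; exact List.mem_cons_self
      have hgood : ∃ j, ¬ WSTS.Bad le (f j :: pl j) := by
        obtain ⟨i, j, hij, hle'⟩ := hwqo f
        exact ⟨j, fun hb => (List.rel_of_pairwise_cons hb (hplMem i j hij)) hle'⟩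
      have hjspec := Nat.find_spec hgood
      have hjmin : ∀ k, k < Nat.find hgood → WSTS.Bad le (f k :: pl k) :=
        fun k hk => of_not_not (Nat.find_min hgood hk)
      have hj0 : Nat.find hgood ≠ 0 := by
        intro h
        rw [h] at hjspec
        exact hjspec (List.pairwise_singleton _ _)
      obtain ⟨j', hj'⟩ : ∃ j', Nat.find hgood = j' + 1 :=
        ⟨Nat.find hgood - 1, by omega⟩
      rw [hj'] at hjspec
      have hjmin' : ∀ k, k ≤ j' → WSTS.Bad le (f k :: pl k) :=
        fun k hk => hjmin k (by omega)
      have hInrUp : ∀ k, k ≤ j' →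
          ∃ F, WSTS.runF succ leb s k = Sum.inr F ∧ (f k, pl k) ∈ F := by
        intro k
        induction k with
        | zero =>
          intro _
          refine ⟨[(s, [])], rfl, ?_⟩
          have h0 : pl 0 = [] := rfl
          rw [h0, hf0]
          exact List.mem_singleton.mpr rfl
        | succ k ihk =>
          intro hk
          obtain ⟨F, hF, hpmem⟩ := ihk (by omega)
          cases hF0 : F with
          | nil => rw [hF0] at hpmem; cases hpmem
          | cons a F0' =>
            subst hF0
            have hstep1 : WSTS.runF succ leb s (k + 1) =
                WSTS.Gstep succ leb (Sum.inr (a :: F0')) := by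
              rw [show WSTS.runF succ leb s (k + 1) =
                WSTS.Gstep succ leb (WSTS.runF succ leb s k) from rfl, hF]
            cases hAny : WSTS.anyTrue ((WSTS.extsAll succ (a :: F0')).map (WSTS.goodExt leb)) with
            | true =>
              exfalso
              apply hnotrue (k + 1)
              rw [hstep1]
              simp [WSTS.Gstep, hAny]
            | false =>
              refine ⟨WSTS.extsAll succ (a :: F0'), by rw [hstep1]; simp [WSTS.Gstep, hAny], ?_⟩
              apply WSTS.mem_extsAll.mpr
              exact ⟨(f k, pl k), hpmem, f (k + 1), (hsucc _ _).mp (hfstep k), by rw [hplsucc]⟩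
      obtain ⟨F, hF, hpmem⟩ := hInrUp j' (le_refl _)
      cases hF0 : F with
      | nil => rw [hF0] at hpmem; cases hpmem
      | cons a F0' =>
        subst hF0
        -- the extension (f (j'+1), pl (j'+1)) is good
        have hgx : ∃ x ∈ pl (j' + 1), le x (f (j' + 1)) := by
          by_contra hno
          push_neg at hno
          apply hjspec
          rw [hplsucc]
          rw [WSTS.Bad, List.pairwise_cons]
          refine ⟨?_, hjmin' j' (le_refl _)⟩
          intro x hx hlex
          exact hno x (by rw [hplsucc]; exact hx) hlex
        obtain ⟨x, hx, hlex⟩ := hgx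
        have hqmem : (f (j' + 1), pl (j' + 1)) ∈ WSTS.extsAll succ (a :: F0') := by
          apply WSTS.mem_extsAll.mpr
          exact ⟨(f j', pl j'), hpmem, f (j' + 1), (hsucc _ _).mp (hfstep j'), by rw [hplsucc]⟩
        have hgq : WSTS.goodExt leb (f (j' + 1), pl (j' + 1)) = true := by
          rw [WSTS.goodExt]
          apply WSTS.anyTrue_iff.mpr
          exact List.mem_map.mpr ⟨x, hx, (hleb _ _).mpr hlex⟩
        have hAny : WSTS.anyTrue ((WSTS.extsAll succ (a :: F0')).map (WSTS.goodExt leb)) = true :=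
          WSTS.anyTrue_iff.mpr (List.mem_map.mpr ⟨_, hqmem, hgq⟩)
        apply hnotrue (j' + 1)
        rw [show WSTS.runF succ leb s (j' + 1) =
          WSTS.Gstep succ leb (WSTS.runF succ leb s j') from rfl, hF]
        simp [WSTS.Gstep, hAny]
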